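/- (van Benthem's theorem.) Let φ(x) be an FO-formula over the signature consisting of one binary predicate R and unary predicates, and let σ be the set of propositional variables whose corresponding unary predicates occur in φ. Then the following are equivalent: (1) φ(x) is logically equivalent to the standard translation of some ML-formula; (2) φ(x) is invariant under ML(σ)-bisimulations, i.e., for all Kripke models M1, M2 and worlds u1, u2, if M1,u1 ∼_{ML(σ)} M2,u2 then M1 ⊨ φ(u1) iff M2 ⊨ φ(u2). -/

import Mathlib

open FirstOrder

/-! ### Modal logic -/

/-- Formulas of propositional modal logic ML. -/
inductive ML : Type
  | top : ML
  | var : ℕ → ML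
  | and : ML → ML → ML
  | not : ML → ML
  | dia : ML → ML

/-- A Kripke model. -/
structure Kripke : Type 1 where
  W : Type
  nonempty : Nonempty W
  R : W → W → Prop
  V : ℕ → Set W

/-- Truth of an ML-formula at a world of a Kripke model. -/
def ML.sat (M : Kripke) : M.W → ML → Prop
  | _, .top => True
  | w, .var p => w ∈ M.V p
  | w, .and φ ψ => ML.sat M w φ ∧ ML.sat M w ψ
  | w, .not φ => ¬ ML.sat M w φ
  | w, .dia φ => ∃ v, M.R w v ∧ ML.sat M v φ

/-- `β` is a `σ`-bisimulation between the Kripke models `M₁` and `M₂`. -/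
def IsBisimulation (σ : Set ℕ) (M₁ M₂ : Kripke) (β : M₁.W → M₂.W → Prop) : Prop :=
  ∀ u₁ u₂, β u₁ u₂ →
    (∀ p ∈ σ, (u₁ ∈ M₁.V p ↔ u₂ ∈ M₂.V p)) ∧
    (∀ v₁, M₁.R u₁ v₁ → ∃ v₂, M₂.R u₂ v₂ ∧ β v₁ v₂) ∧
    (∀ v₂, M₂.R u₂ v₂ → ∃ v₁, M₁.R u₁ v₁ ∧ β v₁ v₂)

/-- `σ`-bisimilarity of pointed Kripke models. -/
def Bisimilar (σ : Set ℕ) (M₁ M₂ : Kripke) (w₁ : M₁.W) (w₂ : M₂.W) : Prop :=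
  ∃ β : M₁.W → M₂.W → Prop, IsBisimulation σ M₁ M₂ β ∧ β w₁ w₂

/-! ### The first-order signature of one binary predicate `R` and unary predicates -/

/-- Relation symbols: for each propositional variable `p : ℕ` a unary predicate,
and one binary predicate `R`. -/
def ModalRel : ℕ → Type
  | 0 => Empty
  | 1 => ℕ
  | 2 => Unit
  | _ + 3 => Empty

/-- The first-order language with one binary predicate and unary predicates `p : ℕ`. -/
def modalLang : FirstOrder.Language := ⟨fun _ => Empty, ModalRel⟩

/-- A Kripke model regarded as a `modalLang`-structure. -/
instance Kripke.toStructure (M : Kripke) : modalLang.Structure M.W where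
  funMap := fun f _ => Empty.elim f
  RelMap := fun {n} r =>
    match n, r with
    | 1, p => fun v => v 0 ∈ M.V p
    | 2, _ => fun v => M.R (v 0) (v 1)

/-- Auxiliary standard translation: the free variable is the last bound variable. -/
def ML.stAux : ML → (k : ℕ) → modalLang.BoundedFormula Empty (k + 1)
  | .top, k =>
      Language.BoundedFormula.equal
        (Language.Term.var (Sum.inr (Fin.last k))) (Language.Term.var (Sum.inr (Fin.last k)))
  | .var p, k =>
      Language.BoundedFormula.rel (l := 1) (show modalLang.Relations 1 from p)
        ![Language.Term.var (Sum.inr (Fin.last k))]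
  | .and φ ψ, k => (ML.stAux φ k) ⊓ (ML.stAux ψ k)
  | .not φ, k => (ML.stAux φ k).not
  | .dia φ, k =>
      Language.BoundedFormula.ex
        ((Language.BoundedFormula.rel (l := 2) (show modalLang.Relations 2 from ())
            ![Language.Term.var (Sum.inr (Fin.last k).castSucc),
              Language.Term.var (Sum.inr (Fin.last (k + 1)))]) ⊓
          (ML.stAux φ (k + 1)))

/-- The standard translation of an ML-formula: a first-order formula in one free variable. -/
def ML.st (φ : ML) : modalLang.Formula (Fin 1) :=
  (φ.stAux 0).toFormula.relabel (Sum.elim Empty.elim id)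

/-- The propositional variables corresponding to a relation symbol. -/
def relVars : ∀ {l : ℕ}, ModalRel l → Set ℕ
  | 1, p => {p}
  | 0, r => Empty.elim r
  | 2, _ => ∅
  | _ + 3, r => Empty.elim r

/-- The set of propositional variables whose unary predicates occur in a formula. -/
def unarySyms {α : Type} : ∀ {n : ℕ}, modalLang.BoundedFormula α n → Set ℕ
  | _, .falsum => ∅
  | _, .equal _ _ => ∅
  | _, .rel r _ => relVars r
  | _, .imp f g => unarySyms f ∪ unarySyms g
  | _, .all f => unarySyms f
open FirstOrder Language Structure Filter

/-- The propositional variables occurring in an ML formula. -/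
def mlVars : ML → Set ℕ
  | .top => ∅
  | .var p => {p}
  | .and φ ψ => mlVars φ ∪ mlVars ψ
  | .not φ => mlVars φ
  | .dia φ => mlVars φ

theorem sat_of_bisim {σ : Set ℕ} {M₁ M₂ : Kripke} {β : M₁.W → M₂.W → Prop}
    (hβ : IsBisimulation σ M₁ M₂ β) :
    ∀ (χ : ML), mlVars χ ⊆ σ → ∀ u₁ u₂, β u₁ u₂ → (ML.sat M₁ u₁ χ ↔ ML.sat M₂ u₂ χ)
  | .top, _, _, _, _ => Iff.rfl
  | .var p, h, u₁, u₂, hu => (hβ u₁ u₂ hu).1 p (h rfl)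
  | .and φ ψ, h, u₁, u₂, hu =>
      and_congr (sat_of_bisim hβ φ (fun x hx => h (Or.inl hx)) u₁ u₂ hu)
        (sat_of_bisim hβ ψ (fun x hx => h (Or.inr hx)) u₁ u₂ hu)
  | .not φ, h, u₁, u₂, hu => not_congr (sat_of_bisim hβ φ h u₁ u₂ hu)
  | .dia φ, h, u₁, u₂, hu => by
      constructor
      · rintro ⟨v₁, hr, hv⟩
        obtain ⟨v₂, hr₂, hv₂⟩ := (hβ u₁ u₂ hu).2.1 v₁ hr
        exact ⟨v₂, hr₂, (sat_of_bisim hβ φ h v₁ v₂ hv₂).1 hv⟩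
      · rintro ⟨v₂, hr, hv⟩
        obtain ⟨v₁, hr₁, hv₁⟩ := (hβ u₁ u₂ hu).2.2 v₂ hr
        exact ⟨v₁, hr₁, (sat_of_bisim hβ φ h v₁ v₂ hv₁).2 hv⟩

theorem kripke_relMap_one (M : Kripke) (p : ℕ) (v : Fin 1 → M.W) :
    RelMap (show modalLang.Relations 1 from p) v ↔ v 0 ∈ M.V p := Iff.rfl

theorem kripke_relMap_two (M : Kripke) (r : modalLang.Relations 2) (v : Fin 2 → M.W) :
    RelMap r v ↔ M.R (v 0) (v 1) := Iff.rfl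

theorem realize_rel' {L : FirstOrder.Language} {A : Type*} [L.Structure A] {α : Type} {n k : ℕ}
    {R : L.Relations k} {ts : Fin k → L.Term (α ⊕ Fin n)} {v : α → A} {xs : Fin n → A} :
    (BoundedFormula.rel R ts).Realize v xs ↔ RelMap R fun i => (ts i).realize (Sum.elim v xs) :=
  Iff.rfl

theorem realize_stAux (M : Kripke) : ∀ (χ : ML) (k : ℕ) (e : Empty → M.W) (xs : Fin (k+1) → M.W),
    (χ.stAux k).Realize e xs ↔ ML.sat M (xs (Fin.last k)) χ
  | .top, k, e, xs => by
      simp only [ML.sat]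
      exact iff_of_true rfl trivial
  | .var p, k, e, xs => by
      simp [ML.stAux, realize_rel', kripke_relMap_one, ML.sat]
      exact Iff.rfl
  | .and φ ψ, k, e, xs => by
      simp only [ML.stAux, BoundedFormula.realize_inf, ML.sat,
        realize_stAux M φ k e xs, realize_stAux M ψ k e xs]
  | .not φ, k, e, xs => by
      simp only [ML.stAux, BoundedFormula.realize_not, ML.sat, realize_stAux M φ k e xs]
  | .dia φ, k, e, xs => by
      simp only [ML.stAux, BoundedFormula.realize_ex, BoundedFormula.realize_inf,
        realize_rel', kripke_relMap_two, ML.sat]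
      constructor
      · rintro ⟨v, h1, h2⟩
        rw [realize_stAux M φ (k+1) e (Fin.snoc xs v)] at h2
        rw [Fin.snoc_last] at h2
        refine ⟨v, ?_, h2⟩
        simpa using (kripke_relMap_two M _ _).1 ((realize_rel' (A := M.W)).1 h1)
      · rintro ⟨v, h1, h2⟩
        refine ⟨v, realize_rel'.2 ((kripke_relMap_two M _ _).2 (by simpa using h1)), ?_⟩
        rw [realize_stAux M φ (k+1) e (Fin.snoc xs v), Fin.snoc_last]
        exact h2

theorem realize_st (M : Kripke) (χ : ML) (a : M.W) :
    (ML.st χ).Realize (fun _ => a) ↔ ML.sat M a χ := by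
  rw [ML.st, Formula.realize_relabel, BoundedFormula.realize_toFormula]
  rw [realize_stAux M χ 0]
  exact Iff.rfl

/-- Any `modalLang`-structure viewed as a Kripke model. -/
def kripkeOf (A : Type) [modalLang.Structure A] [Nonempty A] : Kripke where
  W := A
  nonempty := inferInstance
  R := fun a b => RelMap (show modalLang.Relations 2 from ()) ![a, b]
  V := fun p => {a | RelMap (show modalLang.Relations 1 from p) ![a]}

theorem kripkeOf_structure_eq (A : Type) [S : modalLang.Structure A] [Nonempty A] :
    (kripkeOf A).toStructure = S := by
  ext
  · rename_i f v
    exact f.elim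
  · rename_i n r v
    match n, r with
    | 1, p =>
      show @RelMap modalLang A S 1 p ![v 0] ↔ @RelMap modalLang A S 1 p v
      have h : (![v 0] : Fin 1 → A) = v := by funext i; fin_cases i; rfl
      rw [h]
    | 2, r =>
      show @RelMap modalLang A S 2 r ![v 0, v 1] ↔ @RelMap modalLang A S 2 r v
      have h : (![v 0, v 1] : Fin 2 → A) = v := by funext i; fin_cases i <;> rfl
      rw [h]
    | 0, r => exact r.elim
    | (m+3), r => exact r.elim

theorem realize_kripkeOf (A : Type) [S : modalLang.Structure A] [Nonempty A]
    (φ : modalLang.Formula (Fin 1)) (x : Fin 1 → A) :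
    @Formula.Realize _ _ ((kripkeOf A).toStructure) _ φ x ↔ φ.Realize x := by
  rw [kripkeOf_structure_eq]
  exact Iff.rfl

/-- Restrict the valuation of a Kripke model to variables in `σ`. -/
def restrictK (σ : Set ℕ) (M : Kripke) : Kripke :=
  ⟨M.W, M.nonempty, M.R, fun p => {a | p ∈ σ ∧ a ∈ M.V p}⟩

theorem term_realize_restrict (σ : Set ℕ) (M : Kripke) {γ : Type*}
    (z : γ → (restrictK σ M).W) (t : modalLang.Term γ) :
    Term.realize z t = @Term.realize _ M.W M.toStructure _ z t := by
  induction t with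
  | var => rfl
  | func f _ _ => exact Empty.elim f

theorem realize_restrict {α : Type} (σ : Set ℕ) (M : Kripke) :
    ∀ {n : ℕ} (ψ : modalLang.BoundedFormula α n), unarySyms ψ ⊆ σ →
      ∀ (v : α → M.W) (xs : Fin n → M.W),
        (@BoundedFormula.Realize _ _ M.toStructure _ _ ψ v xs ↔
          @BoundedFormula.Realize _ _ (restrictK σ M).toStructure _ _ ψ v xs)
  | _, .falsum, _, _, _ => Iff.rfl
  | _, .equal t₁ t₂, _, v, xs => by
    rw [show (BoundedFormula.equal t₁ t₂ : modalLang.BoundedFormula α _) = Term.bdEqual t₁ t₂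
        from rfl, BoundedFormula.realize_bdEqual]
    refine Iff.trans ?_ (BoundedFormula.realize_bdEqual (M := (restrictK σ M).W) t₁ t₂).symm
    exact Iff.of_eq (congrArg₂ (· = ·) (term_realize_restrict σ M _ t₁).symm
      (term_realize_restrict σ M _ t₂).symm)
  | n, @BoundedFormula.rel _ _ _ l r ts, h, v, xs => by
    rw [realize_rel']
    change _ ↔ RelMap (M := (restrictK σ M).W) r fun i => (ts i).realize (Sum.elim v xs)
    simp only [term_realize_restrict]
    match l, r, ts, h with
    | 1, p, ts, h =>
      have hp : p ∈ σ := h (by simp [unarySyms, relVars]; exact Set.mem_singleton _)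
      exact (and_iff_right hp).symm
    | 2, r, ts, h => exact Iff.rfl
    | 0, r, _, _ => exact Empty.elim r
    | (m+3), r, _, _ => exact Empty.elim r
  | _, .imp f g, h, v, xs => by
    show (_ → _) ↔ (_ → _)
    exact imp_congr (realize_restrict σ M f (fun x hx => h (Or.inl hx)) v xs)
      (realize_restrict σ M g (fun x hx => h (Or.inr hx)) v xs)
  | _, .all f, h, v, xs => by
    show (∀ _, _) ↔ (∀ _, _)
    exact forall_congr' fun a => realize_restrict σ M f h v (Fin.snoc xs a)

/-- The forward direction of van Benthem's theorem. -/
theorem vb_forward (φ : modalLang.Formula (Fin 1)) (σ : Set ℕ) (hσ : σ = unarySyms φ)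
    (χ : ML) (h : ∀ (A : Type) [modalLang.Structure A] [Nonempty A] (a : A),
        φ.Realize (fun _ => a) ↔ (ML.st χ).Realize (fun _ => a)) :
    ∀ (M₁ M₂ : Kripke) (u₁ : M₁.W) (u₂ : M₂.W),
        Bisimilar σ M₁ M₂ u₁ u₂ →
          (φ.Realize (fun _ => u₁) ↔ φ.Realize (fun _ => u₂)) := by
  rintro M₁ M₂ u₁ u₂ ⟨β, hβ, hu⟩
  haveI ne₁ : Nonempty M₁.W := M₁.nonempty
  haveI ne₂ : Nonempty M₂.W := M₂.nonempty
  have hsub : unarySyms φ ⊆ σ := hσ ▸ Set.Subset.rfl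
  -- β is a univ-bisimulation between the restricted models
  have hβ' : IsBisimulation Set.univ (restrictK σ M₁) (restrictK σ M₂) β := by
    intro v₁ v₂ hv
    obtain ⟨h1, h2, h3⟩ := hβ v₁ v₂ hv
    refine ⟨fun p _ => ?_, h2, h3⟩
    show (p ∈ σ ∧ v₁ ∈ M₁.V p) ↔ (p ∈ σ ∧ v₂ ∈ M₂.V p)
    by_cases hp : p ∈ σ
    · exact and_congr Iff.rfl (h1 p hp)
    · simp [hp]
  have key : ∀ (M : Kripke) (u : M.W),
      ((φ.Realize (fun _ => u)) ↔ ML.sat (restrictK σ M) u χ) := by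
    intro M u
    calc φ.Realize (fun _ => u)
        ↔ @Formula.Realize _ _ (restrictK σ M).toStructure _ φ (fun _ => u) :=
          realize_restrict σ M φ hsub _ _
      _ ↔ @Formula.Realize _ _ (restrictK σ M).toStructure _ (ML.st χ) (fun _ => u) := by
          haveI : Nonempty (restrictK σ M).W := M.nonempty
          exact h (restrictK σ M).W u
      _ ↔ ML.sat (restrictK σ M) u χ := realize_st (restrictK σ M) χ u
  rw [key M₁ u₁, key M₂ u₂]
  exact sat_of_bisim hβ' χ (fun x _ => trivial) u₁ u₂ hu
instance kripkeW_nonempty (M : Kripke) : Nonempty M.W := M.nonempty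

/-- The ultraproduct of a family of Kripke models. -/
def uprod (Ms : ℕ → Kripke) (U : Ultrafilter ℕ) : Kripke :=
  kripkeOf ((U : Filter ℕ).Product (fun i => (Ms i).W))

/-- The class of a sequence of worlds in the ultraproduct. -/
def mkW (Ms : ℕ → Kripke) (U : Ultrafilter ℕ) (f : ∀ i, (Ms i).W) : (uprod Ms U).W :=
  show (U : Filter ℕ).Product (fun i => (Ms i).W) from ↑f

theorem mkW_surj (Ms : ℕ → Kripke) (U : Ultrafilter ℕ) (w : (uprod Ms U).W) :
    ∃ f, mkW Ms U f = w :=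
  Quotient.exists_rep w

theorem uprod_R (Ms : ℕ → Kripke) (U : Ultrafilter ℕ) (f g : ∀ i, (Ms i).W) :
    (uprod Ms U).R (mkW Ms U f) (mkW Ms U g) ↔ ∀ᶠ i in (U : Filter ℕ), (Ms i).R (f i) (g i) := by
  show RelMap (M := (U : Filter ℕ).Product fun i => (Ms i).W)
    (show modalLang.Relations 2 from ()) ![mkW Ms U f, mkW Ms U g] ↔ _
  have h : (![mkW Ms U f, mkW Ms U g] : Fin 2 → (U : Filter ℕ).Product (fun i => (Ms i).W)) =
      fun k => (⟦(![f, g] : Fin 2 → ∀ i, (Ms i).W) k⟧ :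
        Quotient ((U : Filter ℕ).productSetoid (fun i => (Ms i).W))) := by
    funext k; fin_cases k <;> rfl
  rw [h]
  exact Language.relMap_quotient_mk' (L := modalLang)
    (s := (U : Filter ℕ).productSetoid (fun i => (Ms i).W)) _ _

theorem uprod_V (Ms : ℕ → Kripke) (U : Ultrafilter ℕ) (p : ℕ) (f : ∀ i, (Ms i).W) :
    mkW Ms U f ∈ (uprod Ms U).V p ↔ ∀ᶠ i in (U : Filter ℕ), f i ∈ (Ms i).V p := by
  show RelMap (M := (U : Filter ℕ).Product fun i => (Ms i).W)
    (show modalLang.Relations 1 from p) ![mkW Ms U f] ↔ _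
  have h : (![mkW Ms U f] : Fin 1 → (U : Filter ℕ).Product (fun i => (Ms i).W)) =
      fun k => (⟦(![f] : Fin 1 → ∀ i, (Ms i).W) k⟧ :
        Quotient ((U : Filter ℕ).productSetoid (fun i => (Ms i).W))) := by
    funext k; fin_cases k <;> rfl
  rw [h]
  exact Language.relMap_quotient_mk' (L := modalLang)
    (s := (U : Filter ℕ).productSetoid (fun i => (Ms i).W)) _ _

/-- Łoś's theorem for modal formulas. -/
theorem sat_uprod (Ms : ℕ → Kripke) (U : Ultrafilter ℕ) :
    ∀ (χ : ML) (f : ∀ i, (Ms i).W),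
      ML.sat (uprod Ms U) (mkW Ms U f) χ ↔ ∀ᶠ i in (U : Filter ℕ), ML.sat (Ms i) (f i) χ
  | .top, f => by simp [ML.sat]
  | .var p, f => uprod_V Ms U p f
  | .and φ ψ, f => by
    show (_ ∧ _) ↔ _
    rw [sat_uprod Ms U φ f, sat_uprod Ms U ψ f, ← eventually_and]
    exact Iff.rfl
  | .not φ, f => by
    show (¬ _) ↔ _
    rw [sat_uprod Ms U φ f]
    exact Ultrafilter.eventually_not.symm
  | .dia φ, f => by
    constructor
    · rintro ⟨v, hR, hs⟩
      obtain ⟨g, rfl⟩ := mkW_surj Ms U v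
      rw [uprod_R] at hR
      rw [sat_uprod Ms U φ g] at hs
      exact (hR.and hs).mono fun i ⟨h1, h2⟩ => ⟨g i, h1, h2⟩
    · intro h
      classical
      obtain ⟨g, hg⟩ : ∃ g : ∀ i, (Ms i).W, ∀ i,
          (∃ v, (Ms i).R (f i) v ∧ ML.sat (Ms i) v φ) →
            ((Ms i).R (f i) (g i) ∧ ML.sat (Ms i) (g i) φ) :=
        ⟨fun i => if hi : ∃ v, (Ms i).R (f i) v ∧ ML.sat (Ms i) v φ then hi.choose
          else Classical.choice (Ms i).nonempty,
         fun i hi => by beta_reduce; rw [dif_pos hi]; exact hi.choose_spec⟩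
      exact ⟨mkW Ms U g, (uprod_R Ms U f g).2 (h.mono fun i hi => (hg i hi).1),
        (sat_uprod Ms U φ g).2 (h.mono fun i hi => (hg i hi).2)⟩

/-- Łoś's theorem for first-order formulas over the ultraproduct of Kripke models. -/
theorem realize_uprod (Ms : ℕ → Kripke) (U : Ultrafilter ℕ) (ψ : modalLang.Formula (Fin 1))
    (f : ∀ i, (Ms i).W) :
    ψ.Realize (fun _ => mkW Ms U f) ↔ ∀ᶠ i in (U : Filter ℕ), ψ.Realize (fun _ => f i) := by
  refine (realize_kripkeOf ((U : Filter ℕ).Product (fun i => (Ms i).W)) ψ _).trans ?_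
  exact Language.Ultraproduct.realize_formula_cast ψ (fun _ => f)

/-- Łoś for the diagonal embedding into an ultrapower. -/
theorem realize_upower (M : Kripke) (U : Ultrafilter ℕ) (ψ : modalLang.Formula (Fin 1))
    (w : M.W) :
    ψ.Realize (fun _ => mkW (fun _ => M) U (fun _ => w)) ↔ ψ.Realize (fun _ => w) := by
  rw [realize_uprod]
  exact eventually_const

theorem sat_upower (M : Kripke) (U : Ultrafilter ℕ) (χ : ML) (w : M.W) :
    ML.sat (uprod (fun _ => M) U) (mkW (fun _ => M) U (fun _ => w)) χ ↔ ML.sat M w χ := by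
  rw [sat_uprod]
  exact eventually_const
private def mlEncode : ML → ℕ
  | .top => Nat.pair 0 0
  | .var p => Nat.pair 1 p
  | .and φ ψ => Nat.pair 2 (Nat.pair (mlEncode φ) (mlEncode ψ))
  | .not φ => Nat.pair 3 (mlEncode φ)
  | .dia φ => Nat.pair 4 (mlEncode φ)

private theorem mlEncode_injective : Function.Injective mlEncode := by
  intro a b
  induction a generalizing b <;> cases b <;>
    simp_all [mlEncode, Nat.pair_eq_pair]
  · rename_i ih1 ih2 _ _
    exact fun h1 h2 => ⟨ih1 h1, ih2 h2⟩
  · rename_i ih _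
    exact fun h => ih h
  · rename_i ih _
    exact fun h => ih h

instance : Countable ML := ⟨⟨mlEncode, mlEncode_injective⟩⟩

/-- Finite conjunctions of an enumeration of modal formulas. -/
def mlConj (e : ℕ → ML) : ℕ → ML
  | 0 => e 0
  | (i+1) => .and (mlConj e i) (e (i+1))

theorem sat_mlConj (e : ℕ → ML) (M : Kripke) (w : M.W) :
    ∀ i, ML.sat M w (mlConj e i) ↔ ∀ n ≤ i, ML.sat M w (e n)
  | 0 => by
    constructor
    · intro h n hn
      rw [Nat.le_zero.1 hn]
      exact h
    · exact fun h => h 0 le_rfl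
  | (i+1) => by
    show (ML.sat M w (mlConj e i) ∧ ML.sat M w (e (i+1))) ↔ _
    rw [sat_mlConj e M w i]
    constructor
    · rintro ⟨h1, h2⟩ n hn
      rcases Nat.lt_succ_iff_lt_or_eq.1 (Nat.lt_succ_of_le hn) with h | h
      · exact h1 n (Nat.lt_succ_iff.1 h)
      · rw [h]; exact h2
    · exact fun h => ⟨fun n hn => h n (le_trans hn (Nat.le_succ i)), h (i+1) le_rfl⟩

theorem mlVars_mlConj (e : ℕ → ML) (σ : Set ℕ) (he : ∀ n, mlVars (e n) ⊆ σ) :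
    ∀ i, mlVars (mlConj e i) ⊆ σ
  | 0 => he 0
  | (i+1) => by
    show mlVars (mlConj e i) ∪ mlVars (e (i+1)) ⊆ σ
    exact Set.union_subset (mlVars_mlConj e σ he i) (he (i+1))

/-- Modal equivalence with respect to formulas with variables in `σ`. -/
def ModEq (σ : Set ℕ) (M₁ M₂ : Kripke) (u₁ : M₁.W) (u₂ : M₂.W) : Prop :=
  ∀ χ : ML, mlVars χ ⊆ σ → (ML.sat M₁ u₁ χ ↔ ML.sat M₂ u₂ χ)
theorem hm_forth (σ : Set ℕ) (Ms Ns : ℕ → Kripke) (U : Ultrafilter ℕ)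
    (hU : (U : Filter ℕ) ≤ Filter.atTop)
    (u₁ : (uprod Ms U).W) (u₂ : (uprod Ns U).W)
    (h : ModEq σ (uprod Ms U) (uprod Ns U) u₁ u₂)
    (v₁ : (uprod Ms U).W) (hR : (uprod Ms U).R u₁ v₁) :
    ∃ v₂, (uprod Ns U).R u₂ v₂ ∧
      ModEq σ (uprod Ms U) (uprod Ns U) v₁ v₂ := by
  classical
  have hΓc : {χ : ML | mlVars χ ⊆ σ ∧ ML.sat (uprod Ms U) v₁ χ}.Countable := Set.to_countable _
  obtain ⟨e, he⟩ := hΓc.exists_eq_range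
    ⟨ML.top, by constructor <;> simp [mlVars, ML.sat]⟩
  have hemem : ∀ n, mlVars (e n) ⊆ σ ∧ ML.sat (uprod Ms U) v₁ (e n) := by
    intro n
    have : e n ∈ Set.range e := Set.mem_range_self n
    rw [← he] at this
    exact this
  obtain ⟨h₂, rfl⟩ := mkW_surj Ns U u₂
  set P : ℕ → ℕ → Prop := fun j i => ∃ v, (Ns j).R (h₂ j) v ∧ ∀ n ≤ i, ML.sat (Ns j) v (e n)
    with hPdef
  have hdia : ∀ i, ∀ᶠ j in (U : Filter ℕ), P j i := by
    intro i
    have h1 : ML.sat (uprod Ms U) u₁ (.dia (mlConj e i)) :=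
      ⟨v₁, hR, (sat_mlConj e _ v₁ i).2 fun n _ => (hemem n).2⟩
    have hv : mlVars (ML.dia (mlConj e i)) ⊆ σ :=
      mlVars_mlConj e σ (fun n => (hemem n).1) i
    have h2 := (h _ hv).1 h1
    have h3 := (sat_uprod Ns U (.dia (mlConj e i)) h₂).1 h2
    exact h3.mono fun j hj => by
      obtain ⟨v, hv1, hv2⟩ := hj
      exact ⟨v, hv1, fun n hn => (sat_mlConj e (Ns j) v i).1 hv2 n hn⟩
  obtain ⟨g, hg⟩ : ∃ g : ∀ j, (Ns j).W, ∀ j i, i ≤ j → P j i →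
      ((Ns j).R (h₂ j) (g j) ∧ ∀ n ≤ i, ML.sat (Ns j) (g j) (e n)) := by
    refine ⟨fun j => if hj : P j (Nat.findGreatest (P j) j) then hj.choose
      else Classical.choice (Ns j).nonempty, fun j i hij hPi => ?_⟩
    have hPG : P j (Nat.findGreatest (P j) j) := Nat.findGreatest_spec hij hPi
    have hle : i ≤ Nat.findGreatest (P j) j := Nat.le_findGreatest hij hPi
    beta_reduce
    rw [dif_pos hPG]
    exact ⟨hPG.choose_spec.1, fun n hn => hPG.choose_spec.2 n (le_trans hn hle)⟩
  have hsat2 : ∀ n, ML.sat (uprod Ns U) (mkW Ns U g) (e n) := by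
    intro n
    rw [sat_uprod]
    exact ((hdia n).and (hU (Filter.eventually_ge_atTop n))).mono fun j ⟨hP, hj⟩ => (hg j n hj hP).2 n le_rfl
  refine ⟨mkW Ns U g, ?_, ?_⟩
  · rw [uprod_R]
    exact (hdia 0).mono fun j hP => (hg j 0 (Nat.zero_le j) hP).1
  · intro χ hχ
    constructor
    · intro hs
      have hmem : χ ∈ Set.range e := by rw [← he]; exact ⟨hχ, hs⟩
      obtain ⟨n, rfl⟩ := hmem
      exact hsat2 n
    · intro hs
      by_contra hns
      have hmem : ML.not χ ∈ Set.range e := by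
        rw [← he]; exact ⟨hχ, hns⟩
      obtain ⟨n, hn⟩ := hmem
      have := hsat2 n
      rw [hn] at this
      exact this hs

theorem hm_bisim (σ : Set ℕ) (Ms Ns : ℕ → Kripke) (U : Ultrafilter ℕ)
    (hU : (U : Filter ℕ) ≤ Filter.atTop) :
    IsBisimulation σ (uprod Ms U) (uprod Ns U)
      (ModEq σ (uprod Ms U) (uprod Ns U)) := by
  intro u₁ u₂ hu
  refine ⟨fun p hp => hu (.var p) (Set.singleton_subset_iff.2 hp),
    fun v₁ hR => hm_forth σ Ms Ns U hU u₁ u₂ hu v₁ hR, fun v₂ hR => ?_⟩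
  have hu' : ModEq σ (uprod Ns U) (uprod Ms U) u₂ u₁ :=
    fun χ hχ => (hu χ hχ).symm
  obtain ⟨v₁, hR₁, hv⟩ := hm_forth σ Ns Ms U hU u₂ u₁ hu' v₂ hR
  exact ⟨v₁, hR₁, fun χ hχ => (hv χ hχ).symm⟩
/-- A fixed free ultrafilter on `ℕ`. -/
noncomputable def UF : Ultrafilter ℕ := Filter.hyperfilter ℕ

theorem UF_le : (UF : Filter ℕ) ≤ Filter.atTop := Nat.hyperfilter_le_atTop

theorem UF_ge (n : ℕ) : ∀ᶠ i in (UF : Filter ℕ), n ≤ i :=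
  UF_le (Filter.eventually_ge_atTop n)

/-- Bisimulation invariance implies invariance under modal equivalence. -/
theorem modEq_inv (φ : modalLang.Formula (Fin 1)) (σ : Set ℕ)
    (hinv : ∀ (M₁ M₂ : Kripke) (u₁ : M₁.W) (u₂ : M₂.W),
        Bisimilar σ M₁ M₂ u₁ u₂ → (φ.Realize (fun _ => u₁) ↔ φ.Realize (fun _ => u₂)))
    (M₁ M₂ : Kripke) (w₁ : M₁.W) (w₂ : M₂.W) (h : ModEq σ M₁ M₂ w₁ w₂) :
    (φ.Realize (fun _ => w₁) ↔ φ.Realize (fun _ => w₂)) := by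
  have hmod : ModEq σ (uprod (fun _ => M₁) UF) (uprod (fun _ => M₂) UF)
      (mkW (fun _ => M₁) UF (fun _ => w₁)) (mkW (fun _ => M₂) UF (fun _ => w₂)) :=
    fun χ hχ => (sat_upower M₁ UF χ w₁).trans ((h χ hχ).trans (sat_upower M₂ UF χ w₂).symm)
  have hbis : Bisimilar σ (uprod (fun _ => M₁) UF) (uprod (fun _ => M₂) UF)
      (mkW (fun _ => M₁) UF (fun _ => w₁)) (mkW (fun _ => M₂) UF (fun _ => w₂)) :=
    ⟨ModEq σ _ _, hm_bisim σ _ _ UF UF_le, hmod⟩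
  have hres := hinv _ _ _ _ hbis
  rwa [realize_upower, realize_upower] at hres

/-- The backward direction of van Benthem's theorem. -/
theorem vb_backward (φ : modalLang.Formula (Fin 1)) (σ : Set ℕ)
    (hinv : ∀ (M₁ M₂ : Kripke) (u₁ : M₁.W) (u₂ : M₂.W),
        Bisimilar σ M₁ M₂ u₁ u₂ → (φ.Realize (fun _ => u₁) ↔ φ.Realize (fun _ => u₂))) :
    ∃ χ : ML, ∀ (A : Type) [modalLang.Structure A] [Nonempty A] (a : A),
        φ.Realize (fun _ => a) ↔ (ML.st χ).Realize (fun _ => a) := by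
  classical
  -- the set of modal consequences of φ
  have hconC : ∀ (M : Kripke) (w : M.W),
      (∀ χ : ML, mlVars χ ⊆ σ →
          (∀ (N : Kripke) (v : N.W), φ.Realize (fun _ => v) → ML.sat N v χ) →
        ML.sat M w χ) →
      φ.Realize (fun _ => w) := by
    intro M w hw
    have hSc : {χ : ML | mlVars χ ⊆ σ ∧ ML.sat M w χ}.Countable := Set.to_countable _
    obtain ⟨e, he⟩ := hSc.exists_eq_range ⟨ML.top, by constructor <;> simp [mlVars, ML.sat]⟩
    have hemem : ∀ n, mlVars (e n) ⊆ σ ∧ ML.sat M w (e n) := by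
      intro n
      have hmem : e n ∈ Set.range e := Set.mem_range_self n
      rw [← he] at hmem
      exact hmem
    have hstep : ∀ i, ∃ (N : Kripke) (v : N.W),
        φ.Realize (fun _ => v) ∧ ML.sat N v (mlConj e i) := by
      intro i
      by_contra hcon
      push_neg at hcon
      have hmem : ML.sat M w (ML.not (mlConj e i)) :=
        hw (ML.not (mlConj e i)) (mlVars_mlConj e σ (fun n => (hemem n).1) i)
          (fun N v hv => hcon N v hv)
      exact hmem ((sat_mlConj e M w i).2 fun n _ => (hemem n).2)
    choose N v hφv hsatv using hstep
    have hall : ∀ n, ML.sat (uprod N UF) (mkW N UF v) (e n) := by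
      intro n
      rw [sat_uprod]
      exact (UF_ge n).mono fun i hi =>
        (sat_mlConj e (N i) (v i) i).1 (hsatv i) n hi
    have hφstar : φ.Realize (fun _ => mkW N UF v) :=
      (realize_uprod N UF φ v).2 (Filter.Eventually.of_forall hφv)
    have hmod : ModEq σ M (uprod N UF) w (mkW N UF v) := by
      intro χ hχ
      constructor
      · intro hs
        obtain ⟨n, rfl⟩ : χ ∈ Set.range e := by rw [← he]; exact ⟨hχ, hs⟩
        exact hall n
      · intro hs
        by_contra hns
        obtain ⟨n, hn⟩ : ML.not χ ∈ Set.range e := by rw [← he]; exact ⟨hχ, hns⟩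
        have h2 := hall n
        rw [hn] at h2
        exact h2 hs
    exact (modEq_inv φ σ hinv M (uprod N UF) w (mkW N UF v) hmod).2 hφstar
  -- compactness: a single conjunction suffices
  have hConc : {χ : ML | mlVars χ ⊆ σ ∧
      ∀ (N : Kripke) (v : N.W), φ.Realize (fun _ => v) → ML.sat N v χ}.Countable :=
    Set.to_countable _
  obtain ⟨c, hc⟩ := hConc.exists_eq_range
    ⟨ML.top, by refine ⟨by simp [mlVars], fun N v _ => trivial⟩⟩
  have hcmem : ∀ n, mlVars (c n) ⊆ σ ∧
      ∀ (N : Kripke) (v : N.W), φ.Realize (fun _ => v) → ML.sat N v (c n) := by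
    intro n
    have hmem : c n ∈ Set.range c := Set.mem_range_self n
    rw [← hc] at hmem
    exact hmem
  have hfin : ∃ i, ∀ (M : Kripke) (w : M.W),
      ML.sat M w (mlConj c i) → φ.Realize (fun _ => w) := by
    by_contra hcon
    push_neg at hcon
    choose K x hx hnx using hcon
    have hallcon : ∀ χ : ML, mlVars χ ⊆ σ →
        (∀ (N : Kripke) (v : N.W), φ.Realize (fun _ => v) → ML.sat N v χ) →
        ML.sat (uprod K UF) (mkW K UF x) χ := by
      intro χ h1 h2
      obtain ⟨n, rfl⟩ : χ ∈ Set.range c := by rw [← hc]; exact ⟨h1, h2⟩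
      rw [sat_uprod]
      exact (UF_ge n).mono fun i hi =>
        (sat_mlConj c (K i) (x i) i).1 (hx i) n hi
    have hφstar := hconC (uprod K UF) (mkW K UF x) hallcon
    rw [realize_uprod] at hφstar
    obtain ⟨i, hi⟩ := (hφstar.mono fun i hi => (hnx i hi)).exists
    exact hi
  obtain ⟨i, hi⟩ := hfin
  refine ⟨mlConj c i, ?_⟩
  intro A SA NEA a
  rw [← realize_kripkeOf A φ (fun _ => a), ← realize_kripkeOf A (ML.st (mlConj c i)) (fun _ => a),
    realize_st (kripkeOf A) (mlConj c i) a]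
  constructor
  · intro hφa
    exact (sat_mlConj c (kripkeOf A) a i).2 fun n _ => (hcmem n).2 (kripkeOf A) a hφa
  · exact hi (kripkeOf A) a
/-- van Benthem's theorem. -/
theorem van_benthem (φ : modalLang.Formula (Fin 1)) (σ : Set ℕ) (hσ : σ = unarySyms φ) :
    (∃ χ : ML, ∀ (A : Type) [modalLang.Structure A] [Nonempty A] (a : A),
        φ.Realize (fun _ => a) ↔ (ML.st χ).Realize (fun _ => a)) ↔
      (∀ (M₁ M₂ : Kripke) (u₁ : M₁.W) (u₂ : M₂.W),
        Bisimilar σ M₁ M₂ u₁ u₂ →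
          (φ.Realize (fun _ => u₁) ↔ φ.Realize (fun _ => u₂))) := by
  constructor
  · rintro ⟨χ, h⟩
    exact vb_forward φ σ hσ χ h
  · intro hinv
    exact vb_backward φ σ hinv
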